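/- arXiv:2505.24122 — 6 statements merged into one kernel-verified Lean document; each statement's English description precedes it below -/
import Mathlib

section
/- Let Stir^B_q(n,k) be defined by the recurrence Stir^B_q(n,k) = Stir^B_q(n-1,k-1) + [2k+1]_q · Stir^B_q(n-1,k) with Stir^B_q(0,k) = 1 if k = 0 and 0 otherwise, where [m]_q = 1 + q + ... + q^{m-1}. Let [2k]!!_q = [2k]_q·[2k-2]_q···[2]_q. Then for all n ≥ 1 and 0 ≤ k ≤ n, the sum over subsets J ⊆ {1,...,n} with |J| = n−k of the product ∏_{i=1}^n [st^B_i(J)+1]_q equals [2k]!!_q · Stir^B_q(n,k). -/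
/-- The q-integer `[m]_q = 1 + q + ⋯ + q^{m-1}` in `ℤ[q]`. -/
noncomputable def qint (m : ℕ) : Polynomial ℤ := ∑ i ∈ Finset.range m, Polynomial.X ^ i

/-- The q-double factorial `[2k]!!_q = [2k]_q [2k−2]_q ⋯ [2]_q`. -/
noncomputable def qdfact (k : ℕ) : Polynomial ℤ := ∏ j ∈ Finset.range k, qint (2 * (j + 1))

/-- The type B q-Stirling numbers, defined by
`Stir^B_q(n,k) = Stir^B_q(n−1,k−1) + [2k+1]_q·Stir^B_q(n−1,k)` with
`Stir^B_q(0,k) = [k = 0]`. -/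
noncomputable def StirB : ℕ → ℕ → Polynomial ℤ
  | 0, k => if k = 0 then 1 else 0
  | n + 1, 0 => qint 1 * StirB n 0
  | n + 1, k + 1 => StirB n k + qint (2 * (k + 1) + 1) * StirB n (k + 1)

/-- The type B staircase `st^B_i(J) = 2·|{1,…,i−1} \ J| + [i ∉ J]`. -/
def stB (J : Finset ℕ) (i : ℕ) : ℕ :=
  2 * ((Finset.Icc 1 (i - 1)) \ J).card + (if i ∉ J then 1 else 0)

open Finset

lemma card_sdiff_Icc {n : ℕ} {J : Finset ℕ} (hJ : J ⊆ Finset.Icc 1 n) :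
    ((Finset.Icc 1 n) \ J).card = n - J.card := by
  rw [Finset.card_sdiff_of_subset hJ, Nat.card_Icc]
  omega

lemma stB_insert {n : ℕ} {J : Finset ℕ} (hJ : J ⊆ Finset.Icc 1 n) {i : ℕ}
    (hi : i ∈ Finset.Icc 1 n) : stB (insert (n+1) J) i = stB J i := by
  rw [Finset.mem_Icc] at hi
  unfold stB
  have h1 : Finset.Icc 1 (i-1) \ insert (n+1) J = Finset.Icc 1 (i-1) \ J := by
    ext x
    simp only [Finset.mem_sdiff, Finset.mem_insert, Finset.mem_Icc]
    constructor
    · rintro ⟨hx, h2⟩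
      exact ⟨hx, fun hxJ => h2 (Or.inr hxJ)⟩
    · rintro ⟨hx, h2⟩
      refine ⟨hx, ?_⟩
      rintro (rfl | hxJ)
      · omega
      · exact h2 hxJ
  have h2 : i ∈ insert (n+1) J ↔ i ∈ J := by
    simp only [Finset.mem_insert]
    constructor
    · rintro (rfl | h) ; · omega
      · exact h
    · exact Or.inr
  rw [h1]
  congr 1
  simp only [h2]

lemma stB_top_insert {n : ℕ} {J : Finset ℕ} (hJ : J ⊆ Finset.Icc 1 n) :
    stB (insert (n+1) J) (n+1) = 2 * (n - J.card) := by
  unfold stB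
  have h1 : Finset.Icc 1 (n+1-1) \ insert (n+1) J = Finset.Icc 1 n \ J := by
    ext x
    simp only [Finset.mem_sdiff, Finset.mem_insert, Finset.mem_Icc, Nat.add_sub_cancel]
    constructor
    · rintro ⟨hx, h2⟩
      exact ⟨hx, fun hxJ => h2 (Or.inr hxJ)⟩
    · rintro ⟨hx, h2⟩
      refine ⟨hx, ?_⟩
      rintro (rfl | hxJ)
      · omega
      · exact h2 hxJ
  rw [h1, card_sdiff_Icc hJ]
  simp

lemma stB_top_notmem {n : ℕ} {J : Finset ℕ} (hJ : J ⊆ Finset.Icc 1 n) :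
    stB J (n+1) = 2 * (n - J.card) + 1 := by
  unfold stB
  have hnJ : (n+1) ∉ J := fun h => by
    have := hJ h; rw [Finset.mem_Icc] at this; omega
  have h1 : Finset.Icc 1 (n+1-1) \ J = Finset.Icc 1 n \ J := by norm_num
  rw [h1, card_sdiff_Icc hJ, if_pos hnJ]

lemma aux (n : ℕ) : ∀ k : ℕ,
    ∑ J ∈ (Finset.Icc 1 n).powerset.filter (fun J => J.card + k = n),
      ∏ i ∈ Finset.Icc 1 n, qint (stB J i + 1)
    = qdfact k * StirB n k := by
  induction n with
  | zero =>
    intro k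
    have h0 : Finset.Icc 1 0 = (∅ : Finset ℕ) := by simp
    cases k with
    | zero => simp [h0, qdfact, StirB, Finset.filter_singleton]
    | succ k => simp [h0, StirB]
  | succ n ih =>
    intro k
    rw [← Finset.sum_filter_add_sum_filter_not
      ((Finset.Icc 1 (n+1)).powerset.filter (fun J => J.card + k = n+1))
      (fun J => (n+1) ∈ J)
      (fun J => ∏ i ∈ Finset.Icc 1 (n+1), qint (stB J i + 1))]
    have hA : ∑ J ∈ (((Finset.Icc 1 (n+1)).powerset.filter (fun J => J.card + k = n+1)).filter
          (fun J => (n+1) ∈ J)),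
        ∏ i ∈ Finset.Icc 1 (n+1), qint (stB J i + 1)
        = qint (2*k+1) * (qdfact k * StirB n k) := by
      rw [← ih k, Finset.mul_sum]
      refine Finset.sum_nbij' (fun J => J.erase (n+1)) (fun J => insert (n+1) J)
        ?_ ?_ ?_ ?_ ?_
      · intro J hJ
        simp only [Finset.mem_filter, Finset.mem_powerset] at hJ ⊢
        obtain ⟨⟨hsub, hcard⟩, hmem⟩ := hJ
        constructor
        · intro x hx
          rw [Finset.mem_erase] at hx
          have := hsub hx.2
          rw [Finset.mem_Icc] at this ⊢
          omega
        · rw [Finset.card_erase_of_mem hmem]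
          have : 1 ≤ J.card := Finset.card_pos.mpr ⟨_, hmem⟩
          omega
      · intro J hJ
        simp only [Finset.mem_filter, Finset.mem_powerset] at hJ ⊢
        obtain ⟨hsub, hcard⟩ := hJ
        have hnJ : (n+1) ∉ J := fun h => by
          have := hsub h; rw [Finset.mem_Icc] at this; omega
        refine ⟨⟨?_, ?_⟩, Finset.mem_insert_self _ _⟩
        · intro x hx
          rw [Finset.mem_insert] at hx
          rcases hx with rfl | hx
          · rw [Finset.mem_Icc]; omega
          · have := hsub hx; rw [Finset.mem_Icc] at this ⊢; omega
        · rw [Finset.card_insert_of_notMem hnJ]; omega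
      · intro J hJ
        simp only [Finset.mem_filter] at hJ
        exact Finset.insert_erase hJ.2
      · intro J hJ
        simp only [Finset.mem_filter, Finset.mem_powerset] at hJ
        have hnJ : (n+1) ∉ J := fun h => by
          have := hJ.1 h; rw [Finset.mem_Icc] at this; omega
        exact Finset.erase_insert hnJ
      · intro J hJ
        simp only [Finset.mem_filter, Finset.mem_powerset] at hJ
        obtain ⟨⟨hsub, hcard⟩, hmem⟩ := hJ
        set J' := J.erase (n+1) with hJ'
        have hJeq : J = insert (n+1) J' := (Finset.insert_erase hmem).symm
        have hsub' : J' ⊆ Finset.Icc 1 n := by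
          intro x hx
          rw [hJ', Finset.mem_erase] at hx
          have := hsub hx.2
          rw [Finset.mem_Icc] at this ⊢
          omega
        have hcard' : J'.card + k = n := by
          rw [hJ', Finset.card_erase_of_mem hmem]
          have : 1 ≤ J.card := Finset.card_pos.mpr ⟨_, hmem⟩
          omega
        rw [Finset.prod_Icc_succ_top (by omega)]
        rw [hJeq, stB_top_insert hsub']
        have hk : n - J'.card = k := by omega
        rw [hk]
        rw [mul_comm]
        congr 1
        have hnJ' : (n+1) ∉ J' := fun h => by
          have := hsub' h; rw [Finset.mem_Icc] at this; omega
        apply Finset.prod_congr rfl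
        intro i hi
        rw [stB_insert hsub' hi]
    rw [hA]
    -- B part
    have hBset : (((Finset.Icc 1 (n+1)).powerset.filter (fun J => J.card + k = n+1)).filter
          (fun J => ¬ (n+1) ∈ J))
        = (Finset.Icc 1 n).powerset.filter (fun J => J.card + k = n + 1) := by
      ext J
      simp only [Finset.mem_filter, Finset.mem_powerset]
      constructor
      · rintro ⟨⟨hsub, hcard⟩, hmem⟩
        refine ⟨?_, hcard⟩
        intro x hx
        have := hsub hx
        rw [Finset.mem_Icc] at this ⊢
        have : x ≠ n+1 := fun h => hmem (h ▸ hx)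
        omega
      · rintro ⟨hsub, hcard⟩
        have hnJ : (n+1) ∉ J := fun h => by
          have := hsub h; rw [Finset.mem_Icc] at this; omega
        exact ⟨⟨fun x hx => by
          have := hsub hx; rw [Finset.mem_Icc] at this ⊢; omega, hcard⟩, hnJ⟩
    rw [hBset]
    cases k with
    | zero =>
      have hempty : (Finset.Icc 1 n).powerset.filter (fun J => J.card + 0 = n + 1) = ∅ := by
        rw [Finset.filter_eq_empty_iff]
        intro J hJ
        rw [Finset.mem_powerset] at hJ
        have := Finset.card_le_card hJ
        rw [Nat.card_Icc] at this
        omega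
      rw [hempty]
      simp only [Finset.sum_empty, add_zero]
      show qint (2*0+1) * (qdfact 0 * StirB n 0) = qdfact 0 * StirB (n+1) 0
      simp only [StirB, qdfact, Finset.range_zero, Finset.prod_empty, one_mul]
    | succ k' =>
      have hBval : ∑ J ∈ (Finset.Icc 1 n).powerset.filter (fun J => J.card + (k'+1) = n + 1),
          ∏ i ∈ Finset.Icc 1 (n+1), qint (stB J i + 1)
          = qint (2*(k'+1)) * (qdfact k' * StirB n k') := by
        rw [← ih k', Finset.mul_sum]
        have hfeq : (Finset.Icc 1 n).powerset.filter (fun J => J.card + (k'+1) = n + 1)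
            = (Finset.Icc 1 n).powerset.filter (fun J => J.card + k' = n) := by
          apply Finset.filter_congr
          intro J _
          constructor <;> intro h <;> omega
        rw [hfeq]
        apply Finset.sum_congr rfl
        intro J hJ
        simp only [Finset.mem_filter, Finset.mem_powerset] at hJ
        obtain ⟨hsub, hcard⟩ := hJ
        rw [Finset.prod_Icc_succ_top (by omega), stB_top_notmem hsub]
        have : n - J.card = k' := by omega
        rw [this, show 2*k'+1+1 = 2*(k'+1) from by omega, mul_comm]
      rw [hBval]
      show qint (2*(k'+1)+1) * (qdfact (k'+1) * StirB n (k'+1))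
          + qint (2*(k'+1)) * (qdfact k' * StirB n k')
          = qdfact (k'+1) * StirB (n+1) (k'+1)
      have hqd : qdfact (k'+1) = qdfact k' * qint (2*(k'+1)) := by
        rw [qdfact, Finset.prod_range_succ]; rfl
      rw [show StirB (n+1) (k'+1) = StirB n k' + qint (2*(k'+1)+1) * StirB n (k'+1) from rfl]
      rw [hqd]
      ring

/-- `∑_{J ⊆ [n], |J| = n−k} ∏_{i=1}^n [st^B_i(J)+1]_q = [2k]!!_q · Stir^B_q(n,k)`. -/
theorem stmt2 (n k : ℕ) (hn : 1 ≤ n) (hk : k ≤ n) :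
    ∑ J ∈ (Finset.Icc 1 n).powerset.filter (fun J => J.card = n - k),
      ∏ i ∈ Finset.Icc 1 n, qint (stB J i + 1)
    = qdfact k * StirB n k := by
  rw [← aux n k]
  apply Finset.sum_congr
  · apply Finset.filter_congr
    intro J _
    constructor <;> intro h <;> omega
  · intros; rfl
end

section
/- For any subset S ⊆ {1,...,n} with a ∈ S and b ∉ S, and integer r > 1: ∂_a h²_r(S) = (x_a² − x_b²)·∂_a h²_{r−1}(S ∪ {b}) + 2x_a·h²_{r−1}(S ∪ {b}), where h²_r(T) is obtained from the complete homogeneous symmetric polynomial h_r in the variables indexed by T by replacing each variable x_i with x_i². -/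
open MvPolynomial

/-- `h²_r(S)`: the complete homogeneous symmetric polynomial of degree `r` in the
variables indexed by `S`, with each variable replaced by its square. -/
noncomputable def h2poly {n : ℕ} (S : Finset (Fin n)) (r : ℕ) : MvPolynomial (Fin n) ℂ :=
  ∑ m ∈ S.sym r, ((m : Multiset (Fin n)).map (fun i => X i ^ 2)).prod

lemma h2poly_insert {n : ℕ} (S : Finset (Fin n)) (b : Fin n) (hb : b ∉ S) (r : ℕ) :
    h2poly (insert b S) (r + 1) = h2poly S (r + 1) + X b ^ 2 * h2poly (insert b S) r := by
  classical
  unfold h2poly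
  rw [← Finset.sum_filter_add_sum_filter_not ((insert b S).sym (r+1)) (fun m => b ∉ m)]
  simp only [not_not]
  congr 1
  · refine Finset.sum_congr ?_ (fun _ _ => rfl)
    ext m
    simp only [Finset.mem_filter, Finset.mem_sym_iff, Finset.mem_insert]
    constructor
    · rintro ⟨h1, h2⟩ x hx
      rcases h1 x hx with rfl | h
      · exact absurd hx h2
      · exact h
    · intro h
      exact ⟨fun x hx => Or.inr (h x hx), fun hbm => hb (h b hbm)⟩
  · rw [Finset.mul_sum]
    have himg : ((insert b S).sym (r+1)).filter (fun m => b ∈ m)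
        = ((insert b S).sym r).image (Sym.cons b) := by
      ext m
      simp only [Finset.mem_filter, Finset.mem_image, Finset.mem_sym_iff]
      constructor
      · rintro ⟨h1, h2⟩
        refine ⟨m.erase b h2, fun x hx => h1 x (by rw [← Sym.cons_erase h2]; exact Sym.mem_cons.mpr (Or.inr hx)), Sym.cons_erase h2⟩
      · rintro ⟨m', hm', rfl⟩
        constructor
        · intro x hx
          rcases Sym.mem_cons.mp hx with h | h
          · exact h ▸ Finset.mem_insert_self b S
          · exact hm' x h
        · exact Sym.mem_cons_self b m'
    rw [himg, Finset.sum_image (fun x _ y _ h => (Sym.cons_inj_right b x y).mp h)]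
    refine Finset.sum_congr rfl fun m _ => ?_
    rw [Sym.coe_cons, Multiset.map_cons, Multiset.prod_cons]

lemma pderiv_h2poly_zero {n : ℕ} (S : Finset (Fin n)) (a : Fin n) (ha : a ∉ S) (r : ℕ) :
    pderiv a (h2poly S r) = 0 := by
  classical
  unfold h2poly
  rw [map_sum]
  refine Finset.sum_eq_zero fun m hm => ?_
  rw [Finset.mem_sym_iff] at hm
  have : ∀ (l : Multiset (Fin n)), (∀ i ∈ l, i ∈ S) →
      pderiv a ((l.map (fun i => X i ^ 2)).prod : MvPolynomial (Fin n) ℂ) = 0 := by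
    intro l
    induction l using Multiset.induction_on with
    | empty => intro _; simp
    | cons c t ih =>
      intro h
      have hc : c ≠ a := by rintro rfl; exact ha (h c (Multiset.mem_cons_self c t))
      simp [Multiset.map_cons, Multiset.prod_cons, pderiv_mul,
        ih (fun i hi => h i (Multiset.mem_cons_of_mem hi)), pderiv_pow, pderiv_X_of_ne hc]
  exact this m (fun i hi => hm i hi)

/-- for `a ∈ S`, `b ∉ S`, `r > 1`:
`∂_a h²_r(S) = (x_a² − x_b²)·∂_a h²_{r−1}(S ∪ {b}) + 2x_a·h²_{r−1}(S ∪ {b})`. -/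
theorem stmt5 {n : ℕ} (S : Finset (Fin n)) (a b : Fin n) (ha : a ∈ S) (hb : b ∉ S)
    (r : ℕ) (hr : 1 < r) :
    pderiv a (h2poly S r)
      = (X a ^ 2 - X b ^ 2) * pderiv a (h2poly (insert b S) (r - 1))
        + 2 * X a * h2poly (insert b S) (r - 1) := by
  classical
  obtain ⟨s, rfl⟩ : ∃ s, r = s + 1 := ⟨r - 1, by omega⟩
  simp only [Nat.add_sub_cancel]
  -- a ∈ insert b S, so insert a ((insert b S).erase a) = insert b S
  have hab : a ≠ b := fun h => hb (h ▸ ha)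
  have haT : a ∈ insert b S := Finset.mem_insert_of_mem ha
  have hanot : a ∉ (insert b S).erase a := Finset.notMem_erase a _
  have hins : insert a ((insert b S).erase a) = insert b S := Finset.insert_erase haT
  -- recursion at T with a
  have h1 : h2poly (insert b S) (s + 1)
      = h2poly ((insert b S).erase a) (s + 1) + X a ^ 2 * h2poly (insert b S) s := by
    conv_lhs => rw [← hins]
    rw [h2poly_insert _ _ hanot, hins]
  -- recursion at S with b
  have h2 : h2poly (insert b S) (s + 1)
      = h2poly S (s + 1) + X b ^ 2 * h2poly (insert b S) s := h2poly_insert S b hb s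
  have e1 := congrArg (pderiv a) h1
  have e2 := congrArg (pderiv a) h2
  rw [map_add, pderiv_mul, pderiv_h2poly_zero _ _ hanot, pderiv_pow, pderiv_X_self] at e1
  rw [map_add, pderiv_mul, pderiv_pow, pderiv_X_of_ne hab.symm] at e2
  rw [e1] at e2
  linear_combination (norm := (push_cast; ring1)) -e2
end

section
/- For any subset S of {1,...,n} and any integer r > n − |S|, the polynomial h_r(S) (complete homogeneous symmetric polynomial of degree r in the variables indexed by S) lies in the ideal of ℂ[x_1,...,x_n] generated by the power sums p_1, ..., p_n (equivalently, by the symmetric polynomials with vanishing constant term). -/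
open MvPolynomial

/-- `h_r(S)`: the complete homogeneous symmetric polynomial of degree `r`
in the variables indexed by `S`. -/
noncomputable def hpoly {n : ℕ} (S : Finset (Fin n)) (r : ℕ) : MvPolynomial (Fin n) ℂ :=
  ∑ m ∈ S.sym r, ((m : Multiset (Fin n)).map X).prod

namespace Stmt6Aux

open Finset PowerSeries

variable {n : ℕ}

/-- `R n` is the polynomial ring. -/
abbrev Rg (n : ℕ) : Type := MvPolynomial (Fin n) ℂ

/-- the geometric series `∑ xᵢᵏ tᵏ`. -/
noncomputable def G (i : Fin n) : PowerSeries (Rg n) := PowerSeries.mk fun k => X i ^ k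

/-- the linear factor `1 - xᵢ t`. -/
noncomputable def F (i : Fin n) : PowerSeries (Rg n) :=
  1 - PowerSeries.C (R := Rg n) (X i) * PowerSeries.X

lemma F_mul_G (i : Fin n) : F i * G i = 1 := by
  ext k
  have hX : PowerSeries.C (R := Rg n) (X i) * PowerSeries.X * G i
      = PowerSeries.C (R := Rg n) (X i) * (PowerSeries.X * G i) := by ring
  rw [F, sub_mul, one_mul, map_sub, hX, PowerSeries.coeff_C_mul]
  cases k with
  | zero => simp [G, coeff_zero_X_mul]
  | succ k =>
      simp [G, coeff_succ_X_mul, coeff_mk, PowerSeries.coeff_one, pow_succ, mul_comm]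

/-- The ideal generated by the power sums `p_1, …, p_n`. -/
noncomputable def Ip (n : ℕ) : Ideal (Rg n) :=
  Ideal.span ((fun k => ∑ i : Fin n, X i ^ k) '' Set.Icc 1 n)

lemma psum_mem_Ip {k : ℕ} (h1 : 1 ≤ k) (h2 : k ≤ n) : psum (Fin n) ℂ k ∈ Ip n := by
  apply Ideal.subset_span
  exact ⟨k, ⟨h1, h2⟩, rfl⟩

/-- Coefficients of the product of geometric series are the `hpoly`s. -/
lemma coeff_prod_G (S : Finset (Fin n)) (r : ℕ) :
    PowerSeries.coeff (R := Rg n) r (∏ i ∈ S, G i) = hpoly S r := by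
  classical
  rw [PowerSeries.coeff_prod]
  simp only [G, coeff_mk]
  rw [hpoly]
  symm
  refine Finset.sum_bij' (fun m _ => Multiset.toFinsupp (m : Multiset (Fin n)))
    (fun l hl => ⟨Finsupp.toMultiset l, ?_⟩) ?_ ?_ ?_ ?_ ?_
  · -- card of toMultiset
    rw [Finset.mem_finsuppAntidiag] at hl
    rw [Finsupp.card_toMultiset, Finsupp.sum, ← hl.1]
    exact (Finset.sum_subset hl.2 fun x _ hx =>
      Finsupp.notMem_support_iff.1 hx).symm ▸ rfl
  · -- hi
    intro m hm
    rw [Finset.mem_finsuppAntidiag]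
    rw [Finset.mem_sym_iff] at hm
    constructor
    · have hsub : (m : Multiset (Fin n)).toFinset ⊆ S := fun x hx =>
        hm x (Multiset.mem_toFinset.1 hx)
      calc ∑ i ∈ S, Multiset.toFinsupp (m : Multiset (Fin n)) i
          = ∑ i ∈ (m : Multiset (Fin n)).toFinset, (m : Multiset (Fin n)).count i := by
            refine (Finset.sum_subset hsub fun x _ hx => ?_).symm
            simpa [Multiset.toFinsupp_apply, Multiset.count_eq_zero] using
              fun h => hx (Multiset.mem_toFinset.2 h)
        _ = Multiset.card (m : Multiset (Fin n)) := Multiset.toFinset_sum_count_eq _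
        _ = r := m.2
    · intro x hx
      rw [Finsupp.mem_support_iff, Multiset.toFinsupp_apply,
        ← Nat.pos_iff_ne_zero, Multiset.count_pos] at hx
      exact hm x hx
  · -- hj
    intro l hl
    rw [Finset.mem_finsuppAntidiag] at hl
    refine Finset.mem_sym_iff.2 ?_
    intro a ha
    have : a ∈ Finsupp.toMultiset l := ha
    rw [Finsupp.mem_toMultiset] at this
    exact hl.2 this
  · -- left inverse
    intro m hm
    exact Subtype.ext (Multiset.toFinsupp_toMultiset _)
  · -- right inverse
    intro l hl
    exact Finsupp.toMultiset_toFinsupp l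
  · -- values
    intro m hm
    rw [Finset.mem_sym_iff] at hm
    have hsub : (m : Multiset (Fin n)).toFinset ⊆ S := fun x hx =>
      hm x (Multiset.mem_toFinset.1 hx)
    rw [Finset.prod_multiset_map_count]
    refine Finset.prod_subset hsub fun x _ hx => ?_
    show (X x : Rg n) ^ Multiset.count x (m : Multiset (Fin n)) = 1
    rw [Multiset.count_eq_zero_of_notMem (fun h => hx (Multiset.mem_toFinset.2 h)), pow_zero]

/-- Coefficients of the product of the linear factors `1 - xᵢ t`. -/
lemma coeff_prod_F (S : Finset (Fin n)) (j : ℕ) :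
    PowerSeries.coeff (R := Rg n) j (∏ i ∈ S, F i)
      = (-1) ^ j * ∑ A ∈ S.powersetCard j, ∏ i ∈ A, X i := by
  classical
  induction S using Finset.induction_on generalizing j with
  | empty =>
      cases j with
      | zero => simp
      | succ j =>
          rw [Finset.powersetCard_eq_empty.2 (by rw [Finset.card_empty]; omega),
            Finset.sum_empty, mul_zero]
          simp [PowerSeries.coeff_one]
  | @insert a S ha ih =>
      rw [Finset.prod_insert ha, F, sub_mul, one_mul, map_sub, mul_assoc,
        PowerSeries.coeff_C_mul]
      cases j with
      | zero =>
          simp [coeff_zero_X_mul, ih 0]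
      | succ j =>
          rw [coeff_succ_X_mul, ih (j + 1), ih j,
            Finset.powersetCard_succ_insert ha,
            Finset.sum_union ?disj, Finset.sum_image ?inj]
          case disj =>
            rw [Finset.disjoint_left]
            intro A hA hA'
            rcases Finset.mem_image.1 hA' with ⟨B, hB, rfl⟩
            have := Finset.mem_powersetCard.1 hA
            exact ha (this.1 (Finset.mem_insert_self a B))
          case inj =>
            intro A hA B hB hAB
            have hA' : a ∉ A := fun h => ha ((Finset.mem_powersetCard.1 hA).1 h)
            have hB' : a ∉ B := fun h => ha ((Finset.mem_powersetCard.1 hB).1 h)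
            rw [← Finset.erase_insert hA', ← Finset.erase_insert hB', hAB]
          have : ∀ A ∈ S.powersetCard j, ∏ i ∈ insert a A, (X i : Rg n) = X a * ∏ i ∈ A, X i := by
            intro A hA
            have hA' : a ∉ A := fun h => ha ((Finset.mem_powersetCard.1 hA).1 h)
            rw [Finset.prod_insert hA']
          rw [Finset.sum_congr rfl this, ← Finset.mul_sum]
          ring

lemma coeff_prod_F_univ (j : ℕ) :
    PowerSeries.coeff (R := Rg n) j (∏ i : Fin n, F i) = (-1) ^ j * esymm (Fin n) ℂ j := by
  rw [coeff_prod_F]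
  rfl

lemma esymm_mem_Ip {k : ℕ} (hk : 1 ≤ k) : esymm (Fin n) ℂ k ∈ Ip n := by
  by_cases hkn : k ≤ n
  · have h := mul_esymm_eq_sum (Fin n) ℂ k
    have hk0 : (k : ℂ) ≠ 0 := Nat.cast_ne_zero.2 (by omega)
    have key : esymm (Fin n) ℂ k
        = MvPolynomial.C ((k : ℂ)⁻¹) * ((k : Rg n) * esymm (Fin n) ℂ k) := by
      rw [← mul_assoc, ← map_natCast (MvPolynomial.C : ℂ →+* Rg n), ← map_mul,
        inv_mul_cancel₀ hk0, map_one, one_mul]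
    rw [key, h]
    apply Ideal.mul_mem_left
    apply Ideal.mul_mem_left
    apply Ideal.sum_mem
    intro a haf
    rw [Finset.mem_filter, Finset.HasAntidiagonal.mem_antidiagonal] at haf
    apply Ideal.mul_mem_left
    refine psum_mem_Ip ?_ ?_ <;> omega
  · have : esymm (Fin n) ℂ k = 0 := by
      rw [esymm]
      rw [Finset.powersetCard_eq_empty.2 (by simp; omega), Finset.sum_empty]
    rw [this]
    exact Ideal.zero_mem _

lemma prod_FG_one : (∏ i : Fin n, F i) * (∏ i : Fin n, G i) = 1 := by
  rw [← Finset.prod_mul_distrib]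
  simp [F_mul_G]

lemma hpoly_univ_mem : ∀ k, 1 ≤ k → hpoly (Finset.univ : Finset (Fin n)) k ∈ Ip n := by
  intro k
  induction k using Nat.strong_induction_on with
  | _ k ih =>
    intro hk
    have h0 : (0 : Rg n) = ∑ p ∈ Finset.HasAntidiagonal.antidiagonal k,
        PowerSeries.coeff (R := Rg n) p.1 (∏ i : Fin n, F i) *
          PowerSeries.coeff (R := Rg n) p.2 (∏ i : Fin n, G i) := by
      rw [← PowerSeries.coeff_mul, prod_FG_one, PowerSeries.coeff_one, if_neg (by omega)]
    have hmem : ((0 : ℕ), k) ∈ Finset.HasAntidiagonal.antidiagonal k := by simp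
    rw [← Finset.add_sum_erase _ _ hmem] at h0
    have hc0 : PowerSeries.coeff (R := Rg n) 0 (∏ i : Fin n, F i) = 1 := by
      rw [coeff_prod_F]; simp
    rw [hc0, one_mul, coeff_prod_G] at h0
    rw [eq_neg_of_add_eq_zero_left h0.symm]
    apply neg_mem
    apply Ideal.sum_mem
    intro p hp
    have hpa := Finset.HasAntidiagonal.mem_antidiagonal.1 (Finset.mem_of_mem_erase hp)
    have hpne := Finset.ne_of_mem_erase hp
    have hp1 : 1 ≤ p.1 := by
      rcases Nat.eq_zero_or_pos p.1 with h | h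
      · exact absurd (Prod.ext_iff.2 ⟨h, by omega⟩) hpne
      · exact h
    by_cases h2 : p.2 = 0
    · rw [coeff_prod_F]
      exact Ideal.mul_mem_right _ _ (Ideal.mul_mem_left _ _ (esymm_mem_Ip hp1))
    · rw [coeff_prod_G]
      exact Ideal.mul_mem_left _ _ (ih p.2 (by omega) (by omega))

lemma main (S : Finset (Fin n)) (r : ℕ) (hr : n - S.card < r) : hpoly S r ∈ Ip n := by
  classical
  have h2 : (∏ i ∈ Sᶜ, F i) * (∏ i : Fin n, G i) = ∏ i ∈ S, G i := by
    rw [show (∏ i : Fin n, G i) = (∏ i ∈ Sᶜ, G i) * (∏ i ∈ S, G i) by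
        rw [mul_comm, Finset.prod_mul_prod_compl],
      ← mul_assoc, ← Finset.prod_mul_distrib]
    simp [F_mul_G]
  have key : hpoly S r
      = PowerSeries.coeff (R := Rg n) r ((∏ i ∈ Sᶜ, F i) * (∏ i : Fin n, G i)) := by
    rw [h2, coeff_prod_G]
  rw [key, PowerSeries.coeff_mul]
  apply Ideal.sum_mem
  intro p hp
  have hpa := Finset.HasAntidiagonal.mem_antidiagonal.1 hp
  by_cases hp2 : p.2 = 0
  · have hvanish : PowerSeries.coeff (R := Rg n) p.1 (∏ i ∈ Sᶜ, F i) = 0 := by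
      rw [coeff_prod_F, Finset.powersetCard_eq_empty.2 (by
        rw [Finset.card_compl, Fintype.card_fin]; omega), Finset.sum_empty, mul_zero]
    rw [hvanish, zero_mul]
    exact Ideal.zero_mem _
  · rw [coeff_prod_G]
    exact Ideal.mul_mem_left _ _ (hpoly_univ_mem p.2 (by omega))

end Stmt6Aux

/-- for `r > n − |S|`, `h_r(S)` lies in the ideal generated by the
power sums `p_1, …, p_n`. -/
theorem stmt6 {n : ℕ} (S : Finset (Fin n)) (r : ℕ) (hr : n - S.card < r) :
    hpoly S r ∈ Ideal.span ((fun k => ∑ i : Fin n, X i ^ k) '' Set.Icc 1 n) :=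
  Stmt6Aux.main S r hr
end

section
/- The type B Vandermonde determinant δ^B_n = ∏_{i=1}^n x_i · ∏_{1≤i<j≤n}(x_i² − x_j²) does not belong to the ideal I^B_n = (p_2, p_4, ..., p_{2n}) of ℂ[x_1,...,x_n]; in fact (δ^B_n ⊙ δ^B_n) > 0, where f ⊙ g = f(∂_1,...,∂_n)(g). -/
open MvPolynomial

/-- The type B Vandermonde `δ^B_n = ∏ᵢ x_i · ∏_{i<j} (x_i² − x_j²)`. -/
noncomputable def deltaB (n : ℕ) : MvPolynomial (Fin n) ℂ :=
  (∏ i : Fin n, X i) * ∏ i : Fin n, ∏ j ∈ Finset.Ioi i, (X i ^ 2 - X j ^ 2)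

namespace Stmt13Aux


variable {n : ℕ}

noncomputable def mvec (τ : Equiv.Perm (Fin n)) : Fin n →₀ ℕ :=
  Finsupp.equivFunOnFinite.symm (fun v => 2 * (n - 1 - (τ v : ℕ)) + 1)

@[simp] lemma mvec_apply (τ : Equiv.Perm (Fin n)) (v : Fin n) :
    mvec τ v = 2 * (n - 1 - (τ v : ℕ)) + 1 := rfl

noncomputable def L (n : ℕ) : MvPolynomial (Fin n) ℂ →ₗ[ℂ] ℂ where
  toFun f := ∑ τ : Equiv.Perm (Fin n), ((Equiv.Perm.sign τ : ℤ) : ℂ) * coeff (mvec τ) f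
  map_add' f g := by simp [coeff_add, mul_add, Finset.sum_add_distrib]
  map_smul' c f := by
    simp only [coeff_smul, smul_eq_mul, RingHom.id_apply, Finset.mul_sum]
    exact Finset.sum_congr rfl fun τ _ => by ring

lemma L_apply (f : MvPolynomial (Fin n) ℂ) :
    L n f = ∑ τ : Equiv.Perm (Fin n), ((Equiv.Perm.sign τ : ℤ) : ℂ) * coeff (mvec τ) f := rfl

lemma L_mul_psum (k : ℕ) (hk : 1 ≤ k) (g : MvPolynomial (Fin n) ℂ) :
    L n (g * ∑ i : Fin n, X i ^ (2 * k)) = 0 := by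
  classical
  rw [L_apply]
  have hterm : ∀ (τ : Equiv.Perm (Fin n)) (i : Fin n),
      coeff (mvec τ) (g * X i ^ (2 * k)) =
        if 2 * k ≤ 2 * (n - 1 - (τ i : ℕ)) + 1 then
          coeff (mvec τ - Finsupp.single i (2 * k)) g else 0 := by
    intro τ i
    rw [X_pow_eq_monomial, coeff_mul_monomial']
    simp only [Finsupp.single_le_iff, mvec_apply, mul_one]
  have hzero : ∀ (τ : Equiv.Perm (Fin n)) (i : Fin n), ¬ ((τ i : ℕ) + k < n) →
      coeff (mvec τ) (g * X i ^ (2 * k)) = 0 := by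
    intro τ i h
    rw [hterm, if_neg]
    have := (τ i).isLt
    omega
  have hsplit : ∑ τ : Equiv.Perm (Fin n), ((Equiv.Perm.sign τ : ℤ) : ℂ) *
        coeff (mvec τ) (g * ∑ i : Fin n, X i ^ (2 * k))
      = ∑ p ∈ (Finset.univ ×ˢ Finset.univ : Finset (Equiv.Perm (Fin n) × Fin n)),
          ((Equiv.Perm.sign p.1 : ℤ) : ℂ) * coeff (mvec p.1) (g * X p.2 ^ (2 * k)) := by
    rw [Finset.sum_product]
    refine Finset.sum_congr rfl fun τ _ => ?_
    rw [Finset.mul_sum, coeff_sum, Finset.mul_sum]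
  rw [hsplit]
  refine Finset.sum_involution
    (fun p _ => if h : (p.1 p.2 : ℕ) + k < n then
        (p.1 * Equiv.swap p.2 (p.1⁻¹ ⟨(p.1 p.2 : ℕ) + k, h⟩),
          p.1⁻¹ ⟨(p.1 p.2 : ℕ) + k, h⟩) else p)
    ?_ ?_ (fun _ _ => Finset.mem_univ _) ?_
  · -- f a + f (inv a) = 0
    rintro ⟨τ, i₀⟩ -
    by_cases h : (τ i₀ : ℕ) + k < n
    · simp only [dif_pos h]
      set j : Fin n := τ⁻¹ ⟨(τ i₀ : ℕ) + k, h⟩ with hj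
      set σ' : Equiv.Perm (Fin n) := τ * Equiv.swap i₀ j with hσ'
      have hτj : τ j = ⟨(τ i₀ : ℕ) + k, h⟩ := Equiv.apply_symm_apply τ _
      have hne : i₀ ≠ j := by
        intro hc
        have h1 : τ i₀ = τ j := congrArg τ hc
        rw [hτj] at h1
        have h2 : (τ i₀ : ℕ) = (τ i₀ : ℕ) + k := congrArg Fin.val h1
        omega
      have hσ'i₀ : σ' i₀ = ⟨(τ i₀ : ℕ) + k, h⟩ := by
        rw [hσ', Equiv.Perm.mul_apply, Equiv.swap_apply_left, hτj]
      have hσ'j : σ' j = τ i₀ := by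
        rw [hσ', Equiv.Perm.mul_apply, Equiv.swap_apply_right]
      have hσ'v : ∀ v, v ≠ i₀ → v ≠ j → σ' v = τ v := by
        intro v h1 h2
        rw [hσ', Equiv.Perm.mul_apply, Equiv.swap_apply_of_ne_of_ne h1 h2]
      have hsign : ((Equiv.Perm.sign σ' : ℤ) : ℂ) = -((Equiv.Perm.sign τ : ℤ) : ℂ) := by
        rw [hσ', Equiv.Perm.sign_mul, Equiv.Perm.sign_swap hne]
        push_cast
        ring
      have hval : (σ' i₀ : ℕ) = (τ i₀ : ℕ) + k := by rw [hσ'i₀]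
      have hvalj : (σ' j : ℕ) = (τ i₀ : ℕ) := by rw [hσ'j]
      have hvτj : (τ j : ℕ) = (τ i₀ : ℕ) + k := by rw [hτj]
      have hm : mvec σ' - Finsupp.single j (2 * k) = mvec τ - Finsupp.single i₀ (2 * k) := by
        ext v
        rw [Finsupp.tsub_apply, Finsupp.tsub_apply, mvec_apply, mvec_apply,
          Finsupp.single_apply, Finsupp.single_apply]
        split_ifs with h1 h2 h2
        · exact absurd (h1.trans h2.symm).symm hne
        · subst h1
          rw [hvalj, hvτj]
          omega
        · subst h2
          rw [hval]
          omega
        · rw [hσ'v v (fun e => h2 e.symm) (fun e => h1 e.symm)]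
      have hc1 : 2 * k ≤ 2 * (n - 1 - (τ i₀ : ℕ)) + 1 := by omega
      have hc2 : 2 * k ≤ 2 * (n - 1 - (σ' j : ℕ)) + 1 := by rw [hvalj]; omega
      show ((Equiv.Perm.sign τ : ℤ) : ℂ) * coeff (mvec τ) (g * X i₀ ^ (2 * k))
          + ((Equiv.Perm.sign σ' : ℤ) : ℂ) * coeff (mvec σ') (g * X j ^ (2 * k)) = 0
      rw [hterm, hterm, if_pos hc1, if_pos hc2, hm, hsign]
      ring
    · simp only [dif_neg h]
      have h0 := hzero τ i₀ h
      show ((Equiv.Perm.sign τ : ℤ) : ℂ) * coeff (mvec τ) (g * X i₀ ^ (2 * k))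
          + ((Equiv.Perm.sign τ : ℤ) : ℂ) * coeff (mvec τ) (g * X i₀ ^ (2 * k)) = 0
      rw [h0]; ring
  · -- g a ≠ a when f a ≠ 0
    rintro ⟨τ, i₀⟩ - hne0
    by_cases h : (τ i₀ : ℕ) + k < n
    · simp only [dif_pos h]
      intro hcontra
      have h2 : τ⁻¹ ⟨(τ i₀ : ℕ) + k, h⟩ = i₀ := congrArg Prod.snd hcontra
      have h3 : τ i₀ = ⟨(τ i₀ : ℕ) + k, h⟩ := by
        conv_lhs => rw [← h2]
        exact Equiv.apply_symm_apply τ _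
      have h4 : (τ i₀ : ℕ) = (τ i₀ : ℕ) + k := congrArg Fin.val h3
      omega
    · exfalso
      apply hne0
      show ((Equiv.Perm.sign τ : ℤ) : ℂ) * coeff (mvec τ) (g * X i₀ ^ (2 * k)) = 0
      rw [hzero τ i₀ h]; ring
  · -- involution
    rintro ⟨τ, i₀⟩ -
    by_cases h : (τ i₀ : ℕ) + k < n
    · simp only [dif_pos h]
      set j : Fin n := τ⁻¹ ⟨(τ i₀ : ℕ) + k, h⟩ with hj
      set σ' : Equiv.Perm (Fin n) := τ * Equiv.swap i₀ j with hσ'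
      have hτj : τ j = ⟨(τ i₀ : ℕ) + k, h⟩ := Equiv.apply_symm_apply τ _
      have hne : i₀ ≠ j := by
        intro hc
        have h1 : τ i₀ = τ j := congrArg τ hc
        rw [hτj] at h1
        have h2 : (τ i₀ : ℕ) = (τ i₀ : ℕ) + k := congrArg Fin.val h1
        omega
      have hσ'i₀ : σ' i₀ = ⟨(τ i₀ : ℕ) + k, h⟩ := by
        rw [hσ', Equiv.Perm.mul_apply, Equiv.swap_apply_left, hτj]
      have hσ'j : σ' j = τ i₀ := by
        rw [hσ', Equiv.Perm.mul_apply, Equiv.swap_apply_right]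
      have hcond : ((σ' j : ℕ) + k < n) := by rw [hσ'j]; exact h
      rw [dif_pos hcond]
      have hfin : (⟨(σ' j : ℕ) + k, hcond⟩ : Fin n) = ⟨(τ i₀ : ℕ) + k, h⟩ := by
        apply Fin.ext
        simp [hσ'j]
      have hback : σ'⁻¹ (⟨(σ' j : ℕ) + k, hcond⟩ : Fin n) = i₀ := by
        rw [hfin, ← hσ'i₀, Equiv.Perm.coe_inv, Equiv.symm_apply_apply]
      refine Prod.ext ?_ hback
      show σ' * Equiv.swap j (σ'⁻¹ ⟨(σ' j : ℕ) + k, hcond⟩) = τ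
      rw [hback, hσ', mul_assoc, Equiv.swap_comm j i₀, Equiv.swap_mul_self, mul_one]
    · simp only [dif_neg h]


noncomputable def uvec (σ : Equiv.Perm (Fin n)) : Fin n →₀ ℕ :=
  Finsupp.equivFunOnFinite.symm (fun v => 2 * (σ⁻¹ v : ℕ) + 1)

@[simp] lemma uvec_apply (σ : Equiv.Perm (Fin n)) (v : Fin n) :
    uvec σ v = 2 * (σ⁻¹ v : ℕ) + 1 := rfl

def Kn (n : ℕ) : ℕ := ∑ i : Fin n, (Finset.Ioi i).card

lemma prod_monomial {ι : Type*} (s : Finset ι) (f : ι → (Fin n →₀ ℕ)) :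
    ∏ i ∈ s, (monomial (f i) (1 : ℂ)) = monomial (∑ i ∈ s, f i) 1 := by
  classical
  induction s using Finset.cons_induction with
  | empty => simp
  | cons a s ha ih => rw [Finset.prod_cons, Finset.sum_cons, ih, monomial_mul, one_mul]

lemma sum_single_eq_uvec (σ : Equiv.Perm (Fin n)) :
    ∑ i : Fin n, Finsupp.single (σ i) (2 * (i : ℕ) + 1) = uvec σ := by
  ext v
  rw [Finsupp.finset_sum_apply, uvec_apply]
  simp only [Finsupp.single_apply]
  rw [Finset.sum_eq_single (σ⁻¹ v)]
  · rw [if_pos (c := σ (σ⁻¹ v) = v) (Equiv.apply_symm_apply σ v)]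
  · intro i _ hne
    rw [if_neg]
    intro e
    exact hne (by rw [← e, Equiv.Perm.coe_inv, Equiv.symm_apply_apply])
  · intro habs
    exact absurd (Finset.mem_univ _) habs

lemma term_eq (σ : Equiv.Perm (Fin n)) :
    ((∏ i : Fin n, X (σ i)) * ∏ i : Fin n, (X (σ i) ^ 2) ^ (i : ℕ) : MvPolynomial (Fin n) ℂ)
      = monomial (uvec σ) 1 := by
  rw [← Finset.prod_mul_distrib]
  have h : ∀ i : Fin n, (X (σ i) * (X (σ i) ^ 2) ^ (i : ℕ) : MvPolynomial (Fin n) ℂ)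
      = monomial (Finsupp.single (σ i) (2 * (i : ℕ) + 1)) 1 := by
    intro i
    rw [← pow_mul, ← pow_succ', ← X_pow_eq_monomial]
  rw [Finset.prod_congr rfl (fun i _ => h i), prod_monomial, sum_single_eq_uvec]

lemma deltaB_eq_sum :
    deltaB n = ∑ σ : Equiv.Perm (Fin n),
      monomial (uvec σ) ((-1 : ℂ) ^ Kn n * ((Equiv.Perm.sign σ : ℤ) : ℂ)) := by
  have h1 : (∏ i : Fin n, ∏ j ∈ Finset.Ioi i, (X i ^ 2 - X j ^ 2) : MvPolynomial (Fin n) ℂ)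
      = C ((-1 : ℂ) ^ Kn n) *
        ∏ i : Fin n, ∏ j ∈ Finset.Ioi i, ((X j ^ 2 - X i ^ 2 : MvPolynomial (Fin n) ℂ)) := by
    have h2 : ∀ i : Fin n, ∀ j ∈ Finset.Ioi i,
        (X i ^ 2 - X j ^ 2 : MvPolynomial (Fin n) ℂ)
          = C (-1 : ℂ) * (X j ^ 2 - X i ^ 2) := by
      intro i j _
      rw [map_neg, map_one]
      ring
    calc (∏ i : Fin n, ∏ j ∈ Finset.Ioi i, (X i ^ 2 - X j ^ 2) : MvPolynomial (Fin n) ℂ)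
        = ∏ i : Fin n, ∏ j ∈ Finset.Ioi i,
            (C (-1 : ℂ) * (X j ^ 2 - X i ^ 2)) := by
          exact Finset.prod_congr rfl fun i _ => Finset.prod_congr rfl (h2 i)
      _ = ∏ i : Fin n, (C (-1 : ℂ) ^ (Finset.Ioi i).card *
            ∏ j ∈ Finset.Ioi i, (X j ^ 2 - X i ^ 2)) := by
          refine Finset.prod_congr rfl fun i _ => ?_
          rw [Finset.prod_mul_distrib, Finset.prod_const]
      _ = C ((-1 : ℂ) ^ Kn n) * ∏ i : Fin n, ∏ j ∈ Finset.Ioi i, (X j ^ 2 - X i ^ 2) := by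
          rw [Finset.prod_mul_distrib, Finset.prod_pow_eq_pow_sum, ← map_pow, Kn]
  have h3 : (∏ i : Fin n, ∏ j ∈ Finset.Ioi i, (X j ^ 2 - X i ^ 2) : MvPolynomial (Fin n) ℂ)
      = (Matrix.vandermonde (fun i : Fin n => (X i ^ 2 : MvPolynomial (Fin n) ℂ))).det := by
    rw [Matrix.det_vandermonde]
  rw [deltaB, h1, h3, Matrix.det_apply']
  rw [Finset.mul_sum, Finset.mul_sum]
  refine Finset.sum_congr rfl fun σ _ => ?_
  simp only [Matrix.vandermonde_apply]
  have h4 : (∏ i : Fin n, X i : MvPolynomial (Fin n) ℂ) = ∏ i : Fin n, X (σ i) :=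
    (Equiv.prod_comp σ (fun v => X v)).symm
  calc (∏ i : Fin n, X i : MvPolynomial (Fin n) ℂ) *
        (C ((-1 : ℂ) ^ Kn n) * (((Equiv.Perm.sign σ : ℤ) : MvPolynomial (Fin n) ℂ) *
          ∏ i : Fin n, (X (σ i) ^ 2) ^ (i : ℕ)))
      = C ((-1 : ℂ) ^ Kn n) * (((Equiv.Perm.sign σ : ℤ) : MvPolynomial (Fin n) ℂ) *
          ((∏ i : Fin n, X (σ i)) * ∏ i : Fin n, (X (σ i) ^ 2) ^ (i : ℕ))) := by
        rw [h4]; ring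
    _ = monomial (uvec σ) ((-1 : ℂ) ^ Kn n * ((Equiv.Perm.sign σ : ℤ) : ℂ)) := by
        rw [term_eq]
        have h5 : ((Equiv.Perm.sign σ : ℤ) : MvPolynomial (Fin n) ℂ)
            = C (((Equiv.Perm.sign σ : ℤ) : ℂ)) := by
          rfl
        rw [h5, C_mul_monomial, C_mul_monomial, mul_one]

lemma uvec_eq_mvec_iff (σ τ : Equiv.Perm (Fin n)) :
    uvec σ = mvec τ ↔ σ = τ⁻¹ * Fin.revPerm := by
  constructor
  · intro h
    have h1 : ∀ v, (σ⁻¹ v : ℕ) = n - 1 - (τ v : ℕ) := by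
      intro v
      have := DFunLike.congr_fun h v
      rw [uvec_apply, mvec_apply] at this
      omega
    have h2 : σ⁻¹ = Fin.revPerm * τ := by
      ext v
      rw [Equiv.Perm.mul_apply, Fin.revPerm_apply, Fin.val_rev, h1 v]
      omega
    have h3 : σ = (Fin.revPerm * τ)⁻¹ := by rw [← h2, inv_inv]
    rw [h3, mul_inv_rev]
    rfl
  · intro h
    subst h
    ext v
    rw [uvec_apply, mvec_apply, mul_inv_rev, inv_inv]
    have : (Fin.revPerm : Equiv.Perm (Fin n))⁻¹ = Fin.revPerm := rfl
    rw [this, Equiv.Perm.mul_apply, Fin.revPerm_apply, Fin.val_rev]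
    have := (τ v).isLt
    omega


lemma L_deltaB_ne_zero : L n (deltaB n) ≠ 0 := by
  classical
  have hcoeff : ∀ τ : Equiv.Perm (Fin n),
      coeff (mvec τ) (deltaB n)
        = (-1 : ℂ) ^ Kn n * ((Equiv.Perm.sign (τ⁻¹ * Fin.revPerm) : ℤ) : ℂ) := by
    intro τ
    rw [deltaB_eq_sum, coeff_sum]
    simp only [coeff_monomial]
    rw [Finset.sum_eq_single (τ⁻¹ * Fin.revPerm)]
    · rw [if_pos ((uvec_eq_mvec_iff _ τ).mpr rfl)]
    · intro σ _ hne
      rw [if_neg (fun e => hne ((uvec_eq_mvec_iff σ τ).mp e))]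
    · intro habs
      exact absurd (Finset.mem_univ _) habs
  have hsq : ∀ τ : Equiv.Perm (Fin n),
      ((Equiv.Perm.sign τ : ℤ) : ℂ) * ((Equiv.Perm.sign τ : ℤ) : ℂ) = 1 := by
    intro τ
    rcases Int.units_eq_one_or (Equiv.Perm.sign τ) with h | h <;> rw [h] <;> norm_num
  have hL : L n (deltaB n)
      = (Fintype.card (Equiv.Perm (Fin n)) : ℂ) *
          ((-1 : ℂ) ^ Kn n *
            ((Equiv.Perm.sign (Fin.revPerm : Equiv.Perm (Fin n)) : ℤ) : ℂ)) := by
    rw [L_apply]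
    rw [Finset.sum_congr rfl (fun τ _ => by rw [hcoeff τ])]
    have : ∀ τ : Equiv.Perm (Fin n),
        ((Equiv.Perm.sign τ : ℤ) : ℂ) *
          ((-1 : ℂ) ^ Kn n * ((Equiv.Perm.sign (τ⁻¹ * Fin.revPerm) : ℤ) : ℂ))
          = (-1 : ℂ) ^ Kn n *
              ((Equiv.Perm.sign (Fin.revPerm : Equiv.Perm (Fin n)) : ℤ) : ℂ) := by
      intro τ
      rw [Equiv.Perm.sign_mul, Equiv.Perm.sign_inv]
      push_cast
      calc ((Equiv.Perm.sign τ : ℤ) : ℂ) * ((-1 : ℂ) ^ Kn n *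
            (((Equiv.Perm.sign τ : ℤ) : ℂ) *
              ((Equiv.Perm.sign (Fin.revPerm : Equiv.Perm (Fin n)) : ℤ) : ℂ)))
          = (((Equiv.Perm.sign τ : ℤ) : ℂ) * ((Equiv.Perm.sign τ : ℤ) : ℂ)) *
              ((-1 : ℂ) ^ Kn n *
                ((Equiv.Perm.sign (Fin.revPerm : Equiv.Perm (Fin n)) : ℤ) : ℂ)) := by ring
        _ = (-1 : ℂ) ^ Kn n *
              ((Equiv.Perm.sign (Fin.revPerm : Equiv.Perm (Fin n)) : ℤ) : ℂ) := by
            rw [hsq τ, one_mul]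
    rw [Finset.sum_congr rfl (fun τ _ => this τ), Finset.sum_const, Finset.card_univ,
      nsmul_eq_mul]
  rw [hL]
  apply mul_ne_zero
  · exact_mod_cast Fintype.card_ne_zero
  · apply mul_ne_zero
    · exact pow_ne_zero _ (by norm_num)
    · rcases Int.units_eq_one_or (Equiv.Perm.sign (Fin.revPerm : Equiv.Perm (Fin n)))
        with h | h <;> rw [h] <;> norm_num

end Stmt13Aux

/-- `δ^B_n` does not lie in the type B coinvariant ideal
`I^B_n = (p_2, p_4, …, p_{2n})`. -/
theorem stmt13 (n : ℕ) (hn : 1 ≤ n) :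
    deltaB n ∉ Ideal.span ((fun k => ∑ i : Fin n, X i ^ (2 * k)) '' Set.Icc 1 n) := by
  classical
  intro hmem
  obtain ⟨c, hsupp, hsum⟩ := Submodule.mem_span_set.mp hmem
  have h0 : Stmt13Aux.L n (deltaB n) = 0 := by
    rw [← hsum, Finsupp.sum, map_sum]
    refine Finset.sum_eq_zero fun p hp => ?_
    obtain ⟨k, hk, hpk⟩ := hsupp hp
    rw [smul_eq_mul, ← hpk]
    exact Stmt13Aux.L_mul_psum k hk.1 _
  exact Stmt13Aux.L_deltaB_ne_zero h0
end

section
/- Let 𝒜 be the arrangement in ℂ^n consisting of all hyperplanes {x_j = ±x_i} for j ∉ J, j < i ≤ n, together with {x_j = 0} for j ∉ J, for a fixed J ⊆ [n]. Define derivations ρ^J_i by: ρ^J_i = Σ_{k=i}^n (∏_{j∉J, j<i}(x_j² − x_k²))·x_k·∂_k if i ∉ J, and ρ^J_i = (∏_{j∉J, j<i}(x_j² − x_i²))·∂_i if i ∈ J. Then each ρ^J_i lies in Der(𝒜), i.e., for every defining linear form α of a hyperplane of 𝒜, α divides ρ^J_i(α). -/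
open MvPolynomial

/-- The defining linear forms of the arrangement `B_J`: `x_j − x_i` and `x_j + x_i`
for `j ∉ J`, `j < i`, together with `x_j` for `j ∉ J`. -/
def formsB {n : ℕ} (J : Finset (Fin n)) : Set (MvPolynomial (Fin n) ℂ) :=
  {p | (∃ j i, j ∉ J ∧ j < i ∧ (p = X j - X i ∨ p = X j + X i)) ∨ (∃ j, j ∉ J ∧ p = X j)}

/-- Coefficients of the derivation `ρ^J_i = Σ_k (rho J i k)·∂_k`:
`ρ^J_i = Σ_{k≥i} (∏_{j∉J, j<i}(x_j² − x_k²))·x_k·∂_k` if `i ∉ J`, and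
`ρ^J_i = (∏_{j∉J, j<i}(x_j² − x_i²))·∂_i` if `i ∈ J`. -/
noncomputable def rho {n : ℕ} (J : Finset (Fin n)) (i k : Fin n) : MvPolynomial (Fin n) ℂ :=
  if i ∈ J then
    (if k = i then ∏ j ∈ Finset.Iio i \ J, (X j ^ 2 - X i ^ 2) else 0)
  else
    (if i ≤ k then (∏ j ∈ Finset.Iio i \ J, (X j ^ 2 - X k ^ 2)) * X k else 0)

noncomputable def Fpoly {n : ℕ} (J : Finset (Fin n)) (i : Fin n) :
    Polynomial (MvPolynomial (Fin n) ℂ) :=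
  (∏ j ∈ Finset.Iio i \ J, (Polynomial.C (X j ^ 2) - Polynomial.X ^ 2)) * Polynomial.X

lemma eval_F {n : ℕ} (J : Finset (Fin n)) (i k : Fin n) :
    (Fpoly J i).eval (X k) = (∏ j ∈ Finset.Iio i \ J, (X j ^ 2 - X k ^ 2)) * X k := by
  simp [Fpoly, Polynomial.eval_prod]

lemma eval_F_neg {n : ℕ} (J : Finset (Fin n)) (i k : Fin n) :
    (Fpoly J i).eval (-X k) = -(Fpoly J i).eval (X k) := by
  simp [Fpoly, Polynomial.eval_prod, neg_sq]

lemma sum_mul_pderiv_X {n : ℕ} (r : Fin n → MvPolynomial (Fin n) ℂ) (a : Fin n) :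
    ∑ k : Fin n, r k * pderiv k (X a : MvPolynomial (Fin n) ℂ) = r a := by
  rw [Fintype.sum_eq_single a]
  · simp
  · intro b hb
    rw [pderiv_X_of_ne (Ne.symm hb), mul_zero]

lemma sq_sub_sq_dvd {n : ℕ} {J : Finset (Fin n)} {i a b : Fin n}
    (ha : a ∉ J) (hab : a < i) :
    (X a ^ 2 - X b ^ 2 : MvPolynomial (Fin n) ℂ) ∣
      ∏ j ∈ Finset.Iio i \ J, (X j ^ 2 - X b ^ 2) :=
  Finset.dvd_prod_of_mem _ (by simp [Finset.mem_sdiff, hab, ha])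

/-- each `ρ^J_i` lies in `Der(B_J)`: for every defining linear form `α`
of a hyperplane of `B_J`, `α` divides `ρ^J_i(α)`. -/
theorem stmt15 {n : ℕ} (J : Finset (Fin n)) (i : Fin n)
    (α : MvPolynomial (Fin n) ℂ) (hα : α ∈ formsB J) :
    α ∣ ∑ k : Fin n, rho J i k * pderiv k α := by
  obtain ⟨a, b, haJ, hab, hcase⟩ | ⟨a, haJ, rfl⟩ := hα
  · rcases hcase with rfl | rfl
    · -- α = X a - X b
      have hS : ∑ k : Fin n, rho J i k * pderiv k (X a - X b : MvPolynomial (Fin n) ℂ)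
          = rho J i a - rho J i b := by
        simp only [map_sub, mul_sub, Finset.sum_sub_distrib, sum_mul_pderiv_X]
      rw [hS]
      by_cases hiJ : i ∈ J
      · have hai : a ≠ i := fun h => haJ (h ▸ hiJ)
        rw [rho, rho, if_pos hiJ, if_pos hiJ, if_neg hai]
        by_cases hbi : b = i
        · subst hbi
          rw [if_pos rfl, zero_sub]
          refine dvd_neg.mpr (dvd_trans ?_ (sq_sub_sq_dvd haJ hab))
          exact ⟨X a + X b, by ring⟩
        · rw [if_neg hbi, sub_zero]
          exact dvd_zero _
      · rw [rho, rho, if_neg hiJ, if_neg hiJ]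
        by_cases hia : i ≤ a
        · rw [if_pos hia, if_pos (hia.trans hab.le), ← eval_F, ← eval_F]
          exact Polynomial.sub_dvd_eval_sub _ _ _
        · rw [if_neg hia]
          by_cases hib : i ≤ b
          · rw [if_pos hib, zero_sub]
            refine dvd_neg.mpr (dvd_trans ?_ ((sq_sub_sq_dvd haJ (lt_of_not_ge hia)).mul_right _))
            exact ⟨X a + X b, by ring⟩
          · rw [if_neg hib, sub_zero]
            exact dvd_zero _
    · -- α = X a + X b
      have hS : ∑ k : Fin n, rho J i k * pderiv k (X a + X b : MvPolynomial (Fin n) ℂ)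
          = rho J i a + rho J i b := by
        simp only [map_add, mul_add, Finset.sum_add_distrib, sum_mul_pderiv_X]
      rw [hS]
      by_cases hiJ : i ∈ J
      · have hai : a ≠ i := fun h => haJ (h ▸ hiJ)
        rw [rho, rho, if_pos hiJ, if_pos hiJ, if_neg hai]
        by_cases hbi : b = i
        · subst hbi
          rw [if_pos rfl, zero_add]
          refine dvd_trans ?_ (sq_sub_sq_dvd haJ hab)
          exact ⟨X a - X b, by ring⟩
        · rw [if_neg hbi, add_zero]
          exact dvd_zero _
      · rw [rho, rho, if_neg hiJ, if_neg hiJ]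
        by_cases hia : i ≤ a
        · rw [if_pos hia, if_pos (hia.trans hab.le), ← eval_F, ← eval_F]
          have := Polynomial.sub_dvd_eval_sub (X a) (-X b) (Fpoly J i)
          rw [eval_F_neg, sub_neg_eq_add, sub_neg_eq_add] at this
          exact this
        · rw [if_neg hia]
          by_cases hib : i ≤ b
          · rw [if_pos hib, zero_add]
            refine dvd_trans ?_ ((sq_sub_sq_dvd haJ (lt_of_not_ge hia)).mul_right _)
            exact ⟨X a - X b, by ring⟩
          · rw [if_neg hib, add_zero]
            exact dvd_zero _
  · rw [sum_mul_pderiv_X (rho J i) a, rho]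
    by_cases hiJ : i ∈ J
    · rw [if_pos hiJ, if_neg (show ¬ a = i from fun h => haJ (h ▸ hiJ))]
      exact dvd_zero _
    · rw [if_neg hiJ]
      split
      · exact Dvd.intro_left _ rfl
      · exact dvd_zero _
end

section
/- Let J ⊆ [n] and let μ^J_i = Σ_{k=i}^n (∏_{j∉J, j<i}(x_j² − x_k²))·x_k·∂_k for i = 1,...,n. Then the μ^J_i lie in Der(𝒜̃) where 𝒜̃ is the arrangement with linear forms x_j ± x_i (j ∉ J, j < i ≤ n) and x_i (all 1 ≤ i ≤ n); moreover μ^J_1, ..., μ^J_n are linearly independent over ℂ[x_1,...,x_n] (proof by triangularity: μ^J_i involves only ∂_i,...,∂_n with the coefficient of ∂_i nonzero). -/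
open MvPolynomial

/-- The defining linear forms of the extended arrangement `B̃_J`: `x_j − x_i` and
`x_j + x_i` for `j ∉ J`, `j < i`, together with `x_i` for all `i`. -/
def formsBt {n : ℕ} (J : Finset (Fin n)) : Set (MvPolynomial (Fin n) ℂ) :=
  {p | (∃ j i, j ∉ J ∧ j < i ∧ (p = X j - X i ∨ p = X j + X i)) ∨ (∃ i, p = X i)}

/-- Coefficients of the derivation `μ^J_i = Σ_{k≥i} (∏_{j∉J, j<i}(x_j² − x_k²))·x_k·∂_k`. -/
noncomputable def mu {n : ℕ} (J : Finset (Fin n)) (i k : Fin n) : MvPolynomial (Fin n) ℂ :=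
  if i ≤ k then (∏ j ∈ Finset.Iio i \ J, (X j ^ 2 - X k ^ 2)) * X k else 0

lemma prod_sub_prod_dvd' {R : Type*} [CommRing R] {ι : Type*} (s : Finset ι)
    (f g : ι → R) (a : R) (h : ∀ i ∈ s, a ∣ f i - g i) :
    a ∣ ∏ i ∈ s, f i - ∏ i ∈ s, g i := by
  classical
  induction s using Finset.induction with
  | empty => simp
  | insert _ _ hx ih =>
    rename_i x s'
    rw [Finset.prod_insert hx, Finset.prod_insert hx]
    have : f x * ∏ i ∈ s', f i - g x * ∏ i ∈ s', g i
        = f x * (∏ i ∈ s', f i - ∏ i ∈ s', g i) + (f x - g x) * ∏ i ∈ s', g i := by ring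
    rw [this]
    exact dvd_add (Dvd.dvd.mul_left (ih fun i hi => h i (Finset.mem_insert_of_mem hi)) _)
      (Dvd.dvd.mul_right (h x (Finset.mem_insert_self x s')) _)

lemma sum_mu_X {n : ℕ} (J : Finset (Fin n)) (m t : Fin n) :
    ∑ k : Fin n, mu J m k * pderiv k (X t : MvPolynomial (Fin n) ℂ) = mu J m t := by
  rw [Finset.sum_eq_single t]
  · rw [pderiv_X_self, mul_one]
  · intro k _ hk
    rw [pderiv_X_of_ne (Ne.symm hk), mul_zero]
  · simp

lemma X_dvd_mu {n : ℕ} (J : Finset (Fin n)) (m t : Fin n) :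
    (X t : MvPolynomial (Fin n) ℂ) ∣ mu J m t := by
  rw [mu]; split
  · exact dvd_mul_left _ _
  · exact dvd_zero _

lemma X_ne {n : ℕ} {j i : Fin n} (h : j ≠ i) :
    (X j ^ 2 - X i ^ 2 : MvPolynomial (Fin n) ℂ) ≠ 0 := by
  intro hc
  have := congrArg (eval (fun t => if t = j then (1:ℂ) else 0)) hc
  simp only [map_sub, map_pow, eval_X, map_zero, if_pos rfl,
    if_neg (fun hh : i = j => h hh.symm)] at this
  norm_num at this

lemma key_dvd {n : ℕ} (J : Finset (Fin n)) (m : Fin n) {j i : Fin n} (hJ : j ∉ J)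
    (hji : j < i) (ε : ℂ) (hε : ε ^ 2 = 1) :
    (X j - C ε * X i : MvPolynomial (Fin n) ℂ) ∣ mu J m j - C ε * mu J m i := by
  have hC : (C ε : MvPolynomial (Fin n) ℂ) ^ 2 = 1 := by rw [← C_pow, hε, C_1]
  set d : MvPolynomial (Fin n) ℂ := X j - C ε * X i with hd
  have hds : (X j ^ 2 - X i ^ 2 : MvPolynomial (Fin n) ℂ) = d * (X j + C ε * X i) := by
    rw [hd]; linear_combination (X i ^ 2 : MvPolynomial (Fin n) ℂ) * hC
  have hdvd2 : d ∣ (X j ^ 2 - X i ^ 2 : MvPolynomial (Fin n) ℂ) := ⟨_, hds⟩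
  by_cases hmj : m ≤ j
  · have hmi : m ≤ i := hmj.trans hji.le
    rw [mu, mu, if_pos hmj, if_pos hmi]
    set Pj : MvPolynomial (Fin n) ℂ := ∏ t ∈ Finset.Iio m \ J, (X t ^ 2 - X j ^ 2) with hPj
    set Pi : MvPolynomial (Fin n) ℂ := ∏ t ∈ Finset.Iio m \ J, (X t ^ 2 - X i ^ 2) with hPi
    have hPd : d ∣ Pj - Pi := by
      apply prod_sub_prod_dvd'
      intro t _
      have : (X t ^ 2 - X j ^ 2) - (X t ^ 2 - X i ^ 2)
          = -((X j ^ 2 - X i ^ 2) : MvPolynomial (Fin n) ℂ) := by ring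
      rw [this]
      exact hdvd2.neg_right
    have : Pj * X j - C ε * (Pi * X i)
        = Pj * d + (Pj - Pi) * (C ε * X i) := by rw [hd]; ring
    rw [this]
    exact dvd_add (dvd_mul_left _ _) (hPd.mul_right _)
  · by_cases hmi : m ≤ i
    · rw [mu, mu, if_neg hmj, if_pos hmi, zero_sub]
      apply Dvd.dvd.neg_right
      apply Dvd.dvd.mul_left
      apply Dvd.dvd.mul_right
      refine hdvd2.trans (Finset.dvd_prod_of_mem _ ?_)
      rw [Finset.mem_sdiff, Finset.mem_Iio]
      exact ⟨lt_of_not_ge hmj, hJ⟩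
    · rw [mu, mu, if_neg hmj, if_neg hmi, mul_zero, sub_zero]
      exact dvd_zero _

/-- each `μ^J_i` lies in `Der(B̃_J)`, and `μ^J_1, …, μ^J_n` are linearly
independent over `ℂ[x_1,…,x_n]`. -/
theorem stmt17 {n : ℕ} (J : Finset (Fin n)) :
    (∀ (i : Fin n) (α : MvPolynomial (Fin n) ℂ), α ∈ formsBt J →
      α ∣ ∑ k : Fin n, mu J i k * pderiv k α) ∧
    LinearIndependent (MvPolynomial (Fin n) ℂ)
      (fun i : Fin n => (mu J i : Fin n → MvPolynomial (Fin n) ℂ)) := by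
  constructor
  · rintro m α (⟨j, i, hJ, hji, hp | hp⟩ | ⟨i, hp⟩)
    · subst hp
      have hsum : ∑ k : Fin n, mu J m k * pderiv k (X j - X i : MvPolynomial (Fin n) ℂ)
          = mu J m j - mu J m i := by
        simp only [map_sub, mul_sub, Finset.sum_sub_distrib, sum_mu_X]
      rw [hsum]
      have := key_dvd J m hJ hji 1 (by norm_num)
      simpa using this
    · subst hp
      have hsum : ∑ k : Fin n, mu J m k * pderiv k (X j + X i : MvPolynomial (Fin n) ℂ)
          = mu J m j + mu J m i := by
        simp only [map_add, mul_add, Finset.sum_add_distrib, sum_mu_X]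
      rw [hsum]
      have := key_dvd J m hJ hji (-1) (by norm_num)
      simpa [sub_neg_eq_add] using this
    · subst hp
      rw [sum_mu_X]
      exact X_dvd_mu J m i
  · rw [Fintype.linearIndependent_iff]
    intro g hg
    have hg' : ∀ k : Fin n, ∑ t : Fin n, g t * mu J t k = 0 := by
      intro k
      have := congrFun hg k
      simpa [Finset.sum_apply] using this
    have hdiag : ∀ i : Fin n, mu J i i ≠ 0 := by
      intro i
      rw [mu, if_pos le_rfl]
      refine mul_ne_zero (Finset.prod_ne_zero_iff.mpr ?_) (X_ne_zero i)
      intro t ht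
      exact X_ne (ne_of_lt (Finset.mem_Iio.mp (Finset.mem_sdiff.mp ht).1))
    have H : ∀ m : ℕ, ∀ i : Fin n, (i : ℕ) < m → g i = 0 := by
      intro m
      induction m with
      | zero => intro i hi; omega
      | succ m ih =>
        intro i hi
        rcases Nat.lt_succ_iff_lt_or_eq.mp hi with h | h
        · exact ih i h
        · have hsum : ∑ t : Fin n, g t * mu J t i = g i * mu J i i := by
            rw [Finset.sum_eq_single i]
            · intro t _ ht
              rcases lt_or_gt_of_ne ht with hlt | hgt
              · rw [ih t (by rw [← h]; exact hlt), zero_mul]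
              · rw [mu, if_neg (not_le.mpr hgt), mul_zero]
            · intro hni; exact absurd (Finset.mem_univ i) hni
          have h0 := hg' i
          rw [hsum] at h0
          exact (mul_eq_zero.mp h0).resolve_right (hdiag i)
    exact fun i => H n i i.isLt
end
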